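/- An infinite sequence P⃗ = (P_i)_{1≤i<ω} of sets of finite sequences of natural numbers belongs to p[S₁] if and only if, setting P₀ = ∅, P⃗ is an infinite regular level-1 tower and the level-1 tree ∪_i P_i is Π¹₁-wellfounded. -/

import Mathlib

noncomputable section

/-- Brouwer–Kleene strict order on finite sequences, relative to a strict order `lt`
on entries: `s <_BK t` iff `s` properly extends `t`, or at the least position where
both are defined and they differ, the entry of `s` is smaller; `[]` is greatest. -/
def BKltBy {α : Type*} (lt : α → α → Prop) : List α → List α → Prop
  | [], _ => False
  | _ :: _, [] => True
  | a :: s, b :: t => lt a b ∨ (a = b ∧ BKltBy lt s t)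

/-- The Brouwer–Kleene order on finite sequences of natural numbers. -/
def BKlt : List ℕ → List ℕ → Prop := BKltBy (· < ·)

/-- A level-1 tree: a set of nonempty finite sequences of naturals such that whenever
`s⌢(n) ∈ P`: if `s ≠ []` then `s ∈ P`, and `s⌢(m) ∈ P` for every `m < n`. -/
def IsLevel1Tree (P : Set (List ℕ)) : Prop :=
  (∀ s ∈ P, s ≠ []) ∧
  ∀ (s : List ℕ) (n : ℕ), s ++ [n] ∈ P →
    (s ≠ [] → s ∈ P) ∧ ∀ m < n, s ++ [m] ∈ P

/-- A level-1 tree is regular iff the sequence `(1)` is not in it. -/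
def Regular1 (P : Set (List ℕ)) : Prop := ([1] : List ℕ) ∉ P

/-- `P` is Π¹₁-wellfounded: there is no infinite branch through `P`. -/
def Pi11WF (P : Set (List ℕ)) : Prop :=
  ¬ ∃ x : ℕ → ℕ, ∀ n : ℕ, 0 < n → (List.ofFn fun i : Fin n => x i) ∈ P

/-- `rep(P)`: the pair `(p, none)` codes the element `(p)` and `(p, some n)` codes
`(p, n)`. -/
def Rep1 (P : Set (List ℕ)) : Set (List ℕ × Option ℕ) := {x | x.1 ∈ P}

def optNatLt : Option ℕ → Option ℕ → Prop
  | some n, some m => n < m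
  | some _, none => True
  | _, _ => False

/-- The order `<^P` on `rep(P)`. -/
def Rep1lt (x y : List ℕ × Option ℕ) : Prop :=
  BKlt x.1 y.1 ∨ (x.1 = y.1 ∧ optNatLt x.2 y.2)

/-- The first uncountable ordinal. -/
def omega1 : Ordinal := (Cardinal.aleph 1).ord

/-- The tuple `(f p)_{p ∈ P}` respects the level-1 tree `P`: each entry is a countable
limit ordinal and `p ↦ f p` is order preserving from `(P, <_BK)` to the ordinals. -/
def Respects1 (P : Set (List ℕ)) (f : List ℕ → Ordinal) : Prop :=
  (∀ p ∈ P, f p < omega1 ∧ Order.IsSuccLimit (f p)) ∧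
  ∀ p ∈ P, ∀ q ∈ P, BKlt p q → f p < f q

/-- `σ` factors `(P, W)`: `σ(∅) = ∅` and `σ` preserves the Brouwer–Kleene order. -/
def Factors (P W : Set (List ℕ)) (σ : List ℕ → List ℕ) : Prop :=
  σ [] = [] ∧ (∀ p ∈ P, σ p ∈ insert ([] : List ℕ) W) ∧
  ∀ s ∈ insert ([] : List ℕ) P, ∀ t ∈ insert ([] : List ℕ) P,
    BKlt s t → BKlt (σ s) (σ t)

/-- Partial level ≤1 tree `(P, t)`; `t = none` codes the value `-1`. -/
def IsPartialLevelLe1Tree (P : Set (List ℕ)) (t : Option (List ℕ)) : Prop :=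
  P.Finite ∧ IsLevel1Tree P ∧ Regular1 P ∧
  (match t with
   | none => P.Nonempty
   | some s => s ∉ P ∧ IsLevel1Tree (insert s P) ∧ Regular1 (insert s P))

/-- The tuple coded by `f` on `P` together with the value `v` at `t` respects the
partial level ≤1 tree `(P, t)`. -/
def RespectsP1 (P : Set (List ℕ)) (t : Option (List ℕ)) (f : List ℕ → Ordinal)
    (v : Ordinal) : Prop :=
  match t with
  | none => Respects1 P f ∧ v < Ordinal.omega0
  | some s => Respects1 P f ∧
      Respects1 (insert s P) (fun p => if p = s then v else f p)

/-- A level-2 tree of uniform cofinalities. -/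
structure Level2Tree where
  dom : Set (List (List ℕ))
  tr : List (List ℕ) → Set (List ℕ)
  nd : List (List ℕ) → Option (List ℕ)
  nil_mem : [] ∈ dom
  take_mem : ∀ q ∈ dom, ∀ n : ℕ, q.take n ∈ dom
  lvl1 : ∀ q ∈ dom, IsLevel1Tree {a : List ℕ | q ++ [a] ∈ dom}
  tr_nil : tr [] = ∅
  nd_nil : nd [] = some [0]
  ptree : ∀ q ∈ dom, IsPartialLevelLe1Tree (tr q) (nd q)
  compl : ∀ q ∈ dom, ∀ l : ℕ, l < q.length →
    ∃ s : List ℕ, nd (q.take l) = some s ∧ tr (q.take (l + 1)) = insert s (tr (q.take l))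

/-- The node `Q_node(q)`, read as an element of `ℕ^{<ω}`. -/
def Level2Tree.ndVal (Q : Level2Tree) (q : List (List ℕ)) : List ℕ := (Q.nd q).getD []

/-- The interleaved sequence `ᾱ ⊕ q`. -/
def Level2Tree.oplus (Q : Level2Tree) (f : List ℕ → Ordinal) (q : List (List ℕ)) :
    List (Ordinal × Option (List ℕ)) :=
  (List.range q.length).map fun i => (f (Q.ndVal (q.take i)), some (q.getD i []))

/-- The interleaved sequence `ᾱ ⊕ q⌢(-1)`, where `v` is the entry of the tuple at
the node `Q_node(q)`. -/
def Level2Tree.oplusNeg (Q : Level2Tree) (f : List ℕ → Ordinal) (v : Ordinal)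
    (q : List (List ℕ)) : List (Ordinal × Option (List ℕ)) :=
  Q.oplus f q ++ [(v, none)]

def optNodeLt : Option (List ℕ) → Option (List ℕ) → Prop
  | none, some _ => True
  | some s, some t => BKlt s t
  | _, _ => False

def entryLt (x y : Ordinal × Option (List ℕ)) : Prop :=
  x.1 < y.1 ∨ (x.1 = y.1 ∧ optNodeLt x.2 y.2)

/-- The order `<^{²Q}` on interleaved sequences. -/
def Rep2lt : List (Ordinal × Option (List ℕ)) → List (Ordinal × Option (List ℕ)) → Prop :=
  BKltBy entryLt

/-- `rep(²Q)`. -/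
def Level2Tree.rep (Q : Level2Tree) : Set (List (Ordinal × Option (List ℕ))) :=
  {x | (∃ q ∈ Q.dom, ∃ f, Respects1 (Q.tr q) f ∧ x = Q.oplus f q) ∨
       (∃ q ∈ Q.dom, ∃ f v, RespectsP1 (Q.tr q) (Q.nd q) f v ∧ x = Q.oplusNeg f v q)}

/-- Π¹₂-wellfoundedness of a level-2 tree. -/
def Level2Tree.Pi12WF (Q : Level2Tree) : Prop :=
  (∀ q ∈ Q.dom, Pi11WF {a : List ℕ | q ++ [a] ∈ Q.dom}) ∧
  ∀ y : ℕ → List ℕ, (∀ n : ℕ, (List.ofFn fun i : Fin n => y i) ∈ Q.dom) →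
    ¬ Pi11WF (⋃ n : ℕ, Q.tr (List.ofFn fun i : Fin n => y i))

/-- The type of elements of `rep(Q)` for a level ≤2 tree `Q`: `inl` for the level-1
part, `inr` for the level-2 part. -/
abbrev RepLe2Elt := (List ℕ × Option ℕ) ⊕ (List (Ordinal × Option (List ℕ)))

/-- `rep(Q)` for the level ≤2 tree `Q = (P, Q₂)`. -/
def RepLe2 (P : Set (List ℕ)) (Q : Level2Tree) : Set RepLe2Elt :=
  {x | match x with
       | Sum.inl a => a ∈ Rep1 P
       | Sum.inr b => b ∈ Q.rep}

/-- The order `<^Q` for a level ≤2 tree: the level-1 part comes first. -/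
def RepLe2lt : RepLe2Elt → RepLe2Elt → Prop := Sum.Lex Rep1lt Rep2lt

/-- Π¹₂-wellfoundedness of a level ≤2 tree. -/
def Pi12WFle2 (P : Set (List ℕ)) (Q : Level2Tree) : Prop :=
  Pi11WF P ∧ Q.Pi12WF

/-- The sequence of the first `n` values of `x`. -/
def prefixSeq {α : Type*} (x : ℕ → α) (n : ℕ) : List α := List.ofFn fun i : Fin n => x i

/-- `σ` is a winning strategy for Player I (who plays at even rounds) in the game
with payoff set `A`. -/
def WinningStratI (A : Set (ℕ → ℕ)) (σ : List ℕ → ℕ) : Prop :=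
  ∀ x : ℕ → ℕ, (∀ n, x (2 * n) = σ (prefixSeq x (2 * n))) → x ∈ A

/-- `σ` is a winning strategy for Player II (who plays at odd rounds). -/
def WinningStratII (A : Set (ℕ → ℕ)) (σ : List ℕ → ℕ) : Prop :=
  ∀ x : ℕ → ℕ, (∀ n, x (2 * n + 1) = σ (prefixSeq x (2 * n + 1))) → x ∉ A

/-- The Gale–Stewart game with payoff `A` is determined. -/
def GameDetermined (A : Set (ℕ → ℕ)) : Prop :=
  (∃ σ, WinningStratI A σ) ∨ (∃ σ, WinningStratII A σ)

/-- `A` is analytic: the projection of a closed subset of the plane of Baire space,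
i.e., the projection of the set of branches of a set of pairs of finite sequences. -/
def IsAnalytic (A : Set (ℕ → ℕ)) : Prop :=
  ∃ T : Set (List ℕ × List ℕ),
    A = {x | ∃ y : ℕ → ℕ, ∀ n : ℕ, (prefixSeq x n, prefixSeq y n) ∈ T}

/-- Boldface Π¹₁-determinacy: every game with coanalytic payoff is determined. -/
def BoldfacePi11Determinacy : Prop :=
  ∀ A : Set (ℕ → ℕ), IsAnalytic Aᶜ → GameDetermined A

/-- An infinite level-1 tower. -/
def IsInfLevel1Tower (P : ℕ → Set (List ℕ)) : Prop :=
  ∀ i : ℕ, IsLevel1Tree (P i) ∧ (P i).Finite ∧ (P i).ncard = i ∧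
    ∀ j : ℕ, i < j → P i ⊆ P j

/-- `o` is a limit point of the set of ordinals `E`. -/
def IsLimitPtOf (E : Set Ordinal) (o : Ordinal) : Prop :=
  (∃ e ∈ E, e < o) ∧ ∀ b < o, ∃ e ∈ E, b < e ∧ e < o

/-- `E` is a club in `ω₁`. -/
def IsClubInOmega1 (E : Set Ordinal) : Prop :=
  (∀ o ∈ E, o < omega1) ∧
  (∀ o < omega1, ∃ e ∈ E, o < e) ∧
  ∀ o < omega1, IsLimitPtOf E o → o ∈ E

/-- The tuple coded by `f` lies in `[E]^{P↑}`. -/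
def RespectsIn (E : Set Ordinal) (P : Set (List ℕ)) (f : List ℕ → Ordinal) : Prop :=
  Respects1 P f ∧ ∀ p ∈ P, f p ∈ E ∧ IsLimitPtOf E (f p)

/-- The tuple coded by `(f, v)` lies in `[E]^{(P,t)↑}`. -/
def RespectsPIn (E : Set Ordinal) (P : Set (List ℕ)) (t : Option (List ℕ))
    (f : List ℕ → Ordinal) (v : Ordinal) : Prop :=
  RespectsP1 P t f v ∧ (∀ p ∈ P, f p ∈ E ∧ IsLimitPtOf E (f p)) ∧
  (t ≠ none → v ∈ E)

/-- `rep(²Q) ↾ E`. -/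
def Level2Tree.repRestrict (Q : Level2Tree) (E : Set Ordinal) :
    Set (List (Ordinal × Option (List ℕ))) :=
  {x | (∃ q ∈ Q.dom, ∃ f, RespectsIn E (Q.tr q) f ∧ x = Q.oplus f q) ∨
       (∃ q ∈ Q.dom, ∃ f v, RespectsPIn E (Q.tr q) (Q.nd q) f v ∧ x = Q.oplusNeg f v q)}

/-- `rep(Q) ↾ E` for a level ≤2 tree `Q = (P, Q₂)`. -/
def RepLe2Restrict (P : Set (List ℕ)) (Q : Level2Tree) (E : Set Ordinal) :
    Set RepLe2Elt :=
  {x | match x with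
       | Sum.inl a => a ∈ Rep1 P
       | Sum.inr b => b ∈ Q.repRestrict E}

/-- `C` is a closed subset of `X` in the order topology of the strict linear order
`lt` on `X`: `C` contains all of its one-sided limit points in `X`. -/
def OrderClosedIn {σ : Type*} (lt : σ → σ → Prop) (X C : Set σ) : Prop :=
  (∀ v ∈ X, (∃ w ∈ C, lt w v) →
      (∀ w ∈ X, lt w v → ∃ u ∈ C, lt w u ∧ lt u v) → v ∈ C) ∧
  (∀ v ∈ X, (∃ w ∈ C, lt v w) →
      (∀ w ∈ X, lt v w → ∃ u ∈ C, lt v u ∧ lt u w) → v ∈ C)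

end

/-- The condition for `((P_i)_{1≤i≤n}, (a_i)_{1≤i≤n})` (with `P 0 = ∅`) to be a node
of the tree `S₁`. -/
def S1Node (P : ℕ → Set (List ℕ)) (a : ℕ → Ordinal) (n : ℕ) : Prop :=
  (∀ i ≤ n, IsLevel1Tree (P i) ∧ Regular1 (P i) ∧ (P i).Finite ∧ (P i).ncard = i) ∧
  (∀ i j, i ≤ n → j ≤ n → i < j → P i ⊆ P j) ∧
  ∃ g : List ℕ → Ordinal,
    (∀ i < n, ∀ p ∈ P (i + 1) \ P i, g p = a (i + 1)) ∧ Respects1 (P n) g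


/-! ### Auxiliary lemmas for `stmt9` -/

section Stmt9Aux

open Ordinal

lemma stmt9_bk_append : ∀ (s u : List ℕ), u ≠ [] → BKlt (s ++ u) s
  | [], [], hu => absurd rfl hu
  | [], _ :: _, _ => trivial
  | _ :: s, u, hu => Or.inr ⟨rfl, stmt9_bk_append s u hu⟩

lemma stmt9_bk_irrefl : ∀ s : List ℕ, ¬ BKlt s s
  | [] => fun h => h
  | a :: s => fun h => h.elim (fun h1 => lt_irrefl a h1) (fun h2 => stmt9_bk_irrefl s h2.2)

lemma stmt9_bk_concat_cases :
    ∀ (s t : List ℕ) (m : ℕ), BKlt t (s ++ [m]) → ¬ (s ++ [m]) <+: t →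
      (∃ m' < m, (s ++ [m']) <+: t) ∨ (BKlt t s ∧ ¬ s <+: t)
  | _, [], _, h, _ => h.elim
  | [], a :: t, m, h, h2 => by
      rcases h with h | ⟨rfl, _⟩
      · exact Or.inl ⟨a, h, ⟨t, rfl⟩⟩
      · exact absurd ⟨t, rfl⟩ h2
  | b :: s, a :: t, m, h, h2 => by
      rcases h with h | ⟨rfl, h3⟩
      · refine Or.inr ⟨Or.inl h, fun hp => ?_⟩
        exact absurd (List.cons_prefix_cons.mp hp).1.symm (ne_of_lt h)
      · have h2' : ¬ (s ++ [m]) <+: t := fun hp =>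
          h2 (List.cons_prefix_cons.mpr ⟨rfl, hp⟩)
        rcases stmt9_bk_concat_cases s t m h3 h2' with ⟨m', hm', hpre⟩ | ⟨hlt, hnp⟩
        · exact Or.inl ⟨m', hm', List.cons_prefix_cons.mpr ⟨rfl, hpre⟩⟩
        · exact Or.inr ⟨Or.inr ⟨rfl, hlt⟩, fun hp => hnp (List.cons_prefix_cons.mp hp).2⟩

lemma stmt9_exists_concat_prefix {s t : List ℕ} (h : s <+: t) (hne : s ≠ t) :
    ∃ m, (s ++ [m]) <+: t := by
  obtain ⟨u, rfl⟩ := h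
  cases u with
  | nil => exact absurd (by simp) hne
  | cons m u' => exact ⟨m, u', by simp⟩

lemma stmt9_prefix_mem {T : Set (List ℕ)}
    (hcl : ∀ (s : List ℕ) (n : ℕ), s ++ [n] ∈ T → s ≠ [] → s ∈ T) :
    ∀ t ∈ T, ∀ s, s <+: t → s ≠ [] → s ∈ T := by
  intro t
  induction t using List.reverseRecOn with
  | nil =>
      intro _ s hs hsne
      exact absurd (List.prefix_nil.mp hs) hsne
  | append_singleton l a ih =>
      intro ht s hs hsne
      rcases List.prefix_concat_iff.mp hs with rfl | hs'
      · exact ht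
      · have hlne : l ≠ [] := by
          rintro rfl
          exact hsne (List.prefix_nil.mp hs')
        exact ih (hcl l a ht hlne) s hs' hsne

/-- The proper-extension relation within `T`. -/
def S9R (T : Set (List ℕ)) (u v : List ℕ) : Prop := u ∈ T ∧ v <+: u ∧ v ≠ u

/-- The Brouwer–Kleene relation restricted to `T`. -/
def S9B (T : Set (List ℕ)) (u v : List ℕ) : Prop := u ∈ T ∧ v ∈ T ∧ BKlt u v

lemma stmt9_extwf {T : Set (List ℕ)} (hTwf : Pi11WF T)
    (hTpre : ∀ t ∈ T, ∀ s, s <+: t → s ≠ [] → s ∈ T) :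
    WellFounded (S9R T) := by
  haveI : IsIrrefl (List ℕ) (S9R T) := ⟨fun a h => h.2.2 rfl⟩
  haveI : IsTrans (List ℕ) (S9R T) := by
    constructor
    rintro u v w ⟨huT, hvu, hvu'⟩ ⟨_, hwv, hwv'⟩
    refine ⟨huT, hwv.trans hvu, fun hwu => hwv' ?_⟩
    subst hwu
    exact (hwv.eq_of_length (le_antisymm hwv.length_le hvu.length_le))
  haveI : IsStrictOrder (List ℕ) (S9R T) := { }
  rw [RelEmbedding.wellFounded_iff_isEmpty]
  constructor
  intro F
  have hstep : ∀ n : ℕ, F (n + 1) ∈ T ∧ F n <+: F (n + 1) ∧ F n ≠ F (n + 1) :=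
    fun n => F.map_rel_iff.mpr (Nat.lt_succ_self n)
  have hchain : ∀ i j : ℕ, i ≤ j → F i <+: F j := by
    intro i j hij
    induction hij with
    | refl => exact List.prefix_rfl
    | step _ ih => exact ih.trans (hstep _).2.1
  have hlen : ∀ n : ℕ, (F n).length < (F (n + 1)).length := by
    intro n
    rcases hstep n with ⟨_, hp, hne⟩
    exact lt_of_le_of_ne hp.length_le fun h => hne (hp.eq_of_length h)
  have hlen' : ∀ n : ℕ, n ≤ (F n).length := by
    intro n
    induction n with
    | zero => exact Nat.zero_le _
    | succ k ih => exact Nat.lt_of_le_of_lt ih (hlen k)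
  apply hTwf
  refine ⟨fun i => (F (i + 1)).getD i 0, ?_⟩
  intro n hn
  have key : (List.ofFn fun i : Fin n => (F (i + 1)).getD (i : ℕ) 0) = (F n).take n := by
    apply List.ext_getElem
    · simp [Nat.min_eq_left (hlen' n)]
    · intro i h1 h2
      simp only [List.getElem_ofFn, List.getElem_take]
      have hi1 : i < (F (i + 1)).length := Nat.lt_of_lt_of_le (Nat.lt_succ_self i) (hlen' (i + 1))
      rw [List.getD_eq_getElem _ _ hi1]
      have h1' : i < n := by simpa using h1
      exact (hchain (i + 1) n h1').getElem hi1
  rw [key]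
  have hFnT : F n ∈ T := by
    have := (hstep (n - 1)).1
    rwa [Nat.sub_add_cancel hn] at this
  refine hTpre (F n) hFnT _ (List.take_prefix n (F n)) ?_
  have : ((F n).take n).length = n := by simp [Nat.min_eq_left (hlen' n)]
  intro hnil
  rw [hnil] at this
  simp at this
  omega

lemma stmt9_bk_acc {T : Set (List ℕ)} (hTwf : Pi11WF T)
    (hTpre : ∀ t ∈ T, ∀ s, s <+: t → s ≠ [] → s ∈ T) :
    ∀ t ∈ T, Acc (S9B T) t := by
  have hwR := stmt9_extwf hTwf hTpre
  have psi : ∀ s : List ℕ,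
      (∀ t ∈ T, BKlt t s → ¬ s <+: t → Acc (S9B T) t) →
        ∀ t ∈ T, s <+: t → Acc (S9B T) t := by
    intro s
    refine hwR.induction
      (C := fun s => (∀ t ∈ T, BKlt t s → ¬ s <+: t → Acc (S9B T) t) →
        ∀ t ∈ T, s <+: t → Acc (S9B T) t) s ?_
    clear s
    intro s ih H
    have claim : ∀ m : ℕ, ∀ t ∈ T, (s ++ [m]) <+: t → Acc (S9B T) t := by
      intro m
      induction m using Nat.strong_induction_on with
      | _ m ihm =>
        have hpsi' : (∀ t ∈ T, BKlt t (s ++ [m]) → ¬ (s ++ [m]) <+: t → Acc (S9B T) t) →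
            ∀ t ∈ T, (s ++ [m]) <+: t → Acc (S9B T) t := by
          by_cases hmem : s ++ [m] ∈ T
          · exact ih _ ⟨hmem, ⟨[m], rfl⟩, by simp⟩
          · intro _ t ht hpre
            exfalso
            apply hmem
            rcases eq_or_ne (s ++ [m]) t with rfl | hne
            · exact ht
            · exact hTpre t ht _ hpre (by simp)
        apply hpsi'
        intro t ht hlt hnpre
        rcases stmt9_bk_concat_cases s t m hlt hnpre with ⟨m', hm', hpre⟩ | ⟨hlt', hnp'⟩
        · exact ihm m' hm' t ht hpre
        · exact H t ht hlt' hnp'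
    intro t ht hst
    rcases eq_or_ne s t with rfl | hne
    · constructor
      intro u hu
      rcases hu with ⟨huT, _, hlt⟩
      by_cases hpre : s <+: u
      · rcases eq_or_ne s u with rfl | hneu
        · exact absurd hlt (stmt9_bk_irrefl s)
        · obtain ⟨m, hm⟩ := stmt9_exists_concat_prefix hpre hneu
          exact claim m u huT hm
      · exact H u huT hlt hpre
    · obtain ⟨m, hm⟩ := stmt9_exists_concat_prefix hst hne
      exact claim m t ht hm
  intro t ht
  refine psi [] ?_ t ht List.nil_prefix
  intro u _ _ hnp
  exact absurd List.nil_prefix hnp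

lemma stmt9_bk_wf {T : Set (List ℕ)} (hTwf : Pi11WF T)
    (hTpre : ∀ t ∈ T, ∀ s, s <+: t → s ≠ [] → s ∈ T) :
    WellFounded (S9B T) := by
  constructor
  intro t
  by_cases ht : t ∈ T
  · exact stmt9_bk_acc hTwf hTpre t ht
  · exact ⟨t, fun u hu => absurd hu.2.1 ht⟩

lemma stmt9_no_desc (h : ℕ → Ordinal) (hd : ∀ n, h (n + 1) < h n) : False := by
  obtain ⟨o, ⟨n, rfl⟩, hmin⟩ := Ordinal.lt_wf.has_min (Set.range h) ⟨h 0, 0, rfl⟩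
  exact hmin _ ⟨n + 1, rfl⟩ (hd n)

lemma stmt9_lift_omega1 : Ordinal.lift.{u} (omega1 : Ordinal.{0}) = omega1 := by
  show Ordinal.lift ((Cardinal.aleph 1).ord) = (Cardinal.aleph 1).ord
  rw [Cardinal.lift_ord, Cardinal.lift_aleph, Ordinal.lift_one]

end Stmt9Aux

/-- `(P_i)_{1≤i<ω} ∈ p[S₁]` iff, setting `P₀ = ∅`, it is an infinite
regular level-1 tower whose union is Π¹₁-wellfounded. -/
theorem stmt9 (P : ℕ → Set (List ℕ)) (h0 : P 0 = ∅) :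
    (∃ a : ℕ → Ordinal, ∀ n : ℕ, S1Node P a n) ↔
      ((∀ i : ℕ, IsLevel1Tree (P i) ∧ Regular1 (P i) ∧ (P i).Finite ∧
          (P i).ncard = i ∧ ∀ j : ℕ, i < j → P i ⊆ P j) ∧
        Pi11WF (⋃ i, P i)) := by
  classical
  constructor
  · rintro ⟨a, ha⟩
    refine ⟨fun i => ⟨((ha i).1 i le_rfl).1, ((ha i).1 i le_rfl).2.1, ((ha i).1 i le_rfl).2.2.1,
      ((ha i).1 i le_rfl).2.2.2, fun j hij => (ha j).2.1 i j hij.le le_rfl hij⟩, ?_⟩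
    rintro ⟨x, hx⟩
    have hex : ∀ n : ℕ, ∃ i, (List.ofFn fun j : Fin (n + 1) => x j) ∈ P i := fun n =>
      Set.mem_iUnion.mp (hx (n + 1) (Nat.succ_pos n))
    obtain ⟨m, hmem, hmin⟩ : ∃ m : ℕ → ℕ,
        (∀ n, (List.ofFn fun j : Fin (n + 1) => x j) ∈ P (m n)) ∧
          ∀ n k, k < m n → (List.ofFn fun j : Fin (n + 1) => x j) ∉ P k :=
      ⟨fun n => Nat.find (hex n), fun n => Nat.find_spec (hex n),
        fun n k hk => Nat.find_min (hex n) hk⟩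
    have hm1 : ∀ n, 1 ≤ m n := by
      intro n
      rcases Nat.eq_zero_or_pos (m n) with h | h
      · have := hmem n
        rw [h, h0] at this
        exact absurd this (Set.notMem_empty _)
      · exact h
    have hnotmem : ∀ n, (List.ofFn fun j : Fin (n + 1) => x j) ∉ P (m n - 1) := by
      intro n
      exact hmin n _ (by have := hm1 n; omega)
    have hdesc : ∀ n, a (m (n + 1)) < a (m n) := by
      intro n
      have h1n := hm1 n
      have h1n' := hm1 (n + 1)
      set N := m n + m (n + 1) + 1 with hN
      obtain ⟨g, hg1, hg2⟩ := (ha N).2.2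
      have hga : g (List.ofFn fun j : Fin (n + 1) => x j) = a (m n) := by
        have h1 : m n - 1 + 1 = m n := by omega
        have := hg1 (m n - 1) (by omega) _ ⟨by rw [h1]; exact hmem n, hnotmem n⟩
        rwa [h1] at this
      have hga' : g (List.ofFn fun j : Fin (n + 2) => x j) = a (m (n + 1)) := by
        have h1 : m (n + 1) - 1 + 1 = m (n + 1) := by omega
        have := hg1 (m (n + 1) - 1) (by omega) _ ⟨by rw [h1]; exact hmem (n + 1), hnotmem (n + 1)⟩
        rwa [h1] at this
      have hmN : (List.ofFn fun j : Fin (n + 1) => x j) ∈ P N :=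
        (ha N).2.1 (m n) N (by omega) le_rfl (by omega) (hmem n)
      have hmN' : (List.ofFn fun j : Fin (n + 2) => x j) ∈ P N :=
        (ha N).2.1 (m (n + 1)) N (by omega) le_rfl (by omega) (hmem (n + 1))
      have hext : (List.ofFn fun j : Fin (n + 2) => x j)
          = (List.ofFn fun j : Fin (n + 1) => x j) ++ [x (n + 1)] := by
        rw [List.ofFn_succ']
        simp [List.concat_eq_append]
      have hbk : BKlt (List.ofFn fun j : Fin (n + 2) => x j)
          (List.ofFn fun j : Fin (n + 1) => x j) := by
        rw [hext]
        exact stmt9_bk_append _ _ (by simp)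
      have := hg2.2 _ hmN' _ hmN hbk
      rwa [hga, hga'] at this
    exact stmt9_no_desc (fun n => a (m n)) hdesc
  · rintro ⟨htw, hwf⟩
    set T : Set (List ℕ) := ⋃ i, P i with hT
    have hcl : ∀ (s : List ℕ) (n : ℕ), s ++ [n] ∈ T → s ≠ [] → s ∈ T := by
      intro s n hsn hne
      obtain ⟨i, hi⟩ := Set.mem_iUnion.mp hsn
      exact Set.mem_iUnion.mpr ⟨i, ((htw i).1.2 s n hi).1 hne⟩
    have hTpre := stmt9_prefix_mem hcl
    have hwfB := stmt9_bk_wf hwf hTpre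
    haveI : IsWellFounded (List ℕ) (S9B T) := ⟨hwfB⟩
    have hrk : ∀ t, IsWellFounded.rank (S9B T) t < omega1 := by
      intro t
      refine hwfB.induction (C := fun t => IsWellFounded.rank (S9B T) t < omega1) t ?_
      intro t ihp
      rw [IsWellFounded.rank_eq]
      show _ < (Cardinal.aleph 1).ord
      refine Cardinal.iSup_lt_ord_of_isRegular Cardinal.isRegular_aleph_one ?_ ?_
      · exact lt_of_le_of_lt (Cardinal.mk_subtype_le _)
          (lt_of_le_of_lt Cardinal.mk_le_aleph0 Cardinal.aleph0_lt_aleph_one)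
      · rintro ⟨b, hb⟩
        exact (Cardinal.isSuccLimit_ord (Cardinal.aleph0_le_aleph 1)).succ_lt (ihp b hb)
    set F : List ℕ → Ordinal := fun q =>
      Ordinal.omega0 * Order.succ (IsWellFounded.rank (S9B T) q) with hFdef
    have hFlim : ∀ q, Order.IsSuccLimit (F q) := fun q =>
      Ordinal.isSuccLimit_mul_left Ordinal.isSuccLimit_omega0
        ((zero_le (a := IsWellFounded.rank (S9B T) q)).trans_lt (Order.lt_succ _))
    have hFlt : ∀ q, F q < omega1 := by
      intro q
      show Ordinal.omega0 * Order.succ (IsWellFounded.rank (S9B T) q) < (Cardinal.aleph 1).ord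
      rw [Cardinal.lt_ord, Ordinal.card_mul]
      refine Cardinal.mul_lt_of_lt Cardinal.aleph0_lt_aleph_one.le ?_ ?_
      · rw [Ordinal.card_omega0]
        exact Cardinal.aleph0_lt_aleph_one
      · rw [← Cardinal.lt_ord]
        exact (Cardinal.isSuccLimit_ord (Cardinal.aleph0_le_aleph 1)).succ_lt (hrk q)
    have hFmono : ∀ q r, S9B T q r → F q < F r := by
      intro q r h
      show Ordinal.omega0 * _ < Ordinal.omega0 * _
      rw [mul_lt_mul_iff_right₀ Ordinal.omega0_pos]
      exact Order.succ_lt_succ (IsWellFounded.rank_lt_of_rel h)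
    have hsing : ∀ i : ℕ, ∃ q, P (i + 1) \ P i = {q} := by
      intro i
      rw [← Set.ncard_eq_one,
        Set.ncard_diff ((htw i).2.2.2.2 (i + 1) (Nat.lt_succ_self i)) (htw i).2.2.1,
        (htw (i + 1)).2.2.2.1, (htw i).2.2.2.1]
      omega
    choose p hp using hsing
    have hGlt : ∀ q, (F q).lift < omega1 := by
      intro q
      have := Ordinal.lift_lt.mpr (hFlt q)
      rwa [stmt9_lift_omega1] at this
    refine ⟨fun k => (F (p (k - 1))).lift, ?_⟩
    intro n
    refine ⟨fun i _ => ⟨(htw i).1, (htw i).2.1, (htw i).2.2.1, (htw i).2.2.2.1⟩,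
      fun i j _ _ hij => (htw i).2.2.2.2 j hij, fun q => (F q).lift, ?_, ?_, ?_⟩
    · intro i _ q hq
      rw [hp i] at hq
      rw [Set.mem_singleton_iff.mp hq]
      simp
    · intro q hq
      exact ⟨hGlt q, Ordinal.isSuccLimit_lift.mpr (hFlim q)⟩
    · intro q hq r hr hbk
      exact Ordinal.lift_lt.mpr
        (hFmono q r ⟨Set.mem_iUnion.mpr ⟨n, hq⟩, Set.mem_iUnion.mpr ⟨n, hr⟩, hbk⟩)
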